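/- Let G be the cycle graph C_n with n ≥ 3, and consider the synchronous majority dynamics where each vertex adopts the majority color among its two neighbors and keeps its color in case of a tie. If the initial 2-coloring (red/blue) contains no edge with both endpoints blue and contains at least one edge with both endpoints red, then after at most ⌈n/2⌉ rounds every vertex is red. -/
import Mathlib


/-- Synchronous majority dynamics on the cycle `C_n` (vertices `ZMod n`), colors in
`Bool` with `true` = red and `false` = blue: a vertex adopts the common color of its
two neighbors if they agree, and keeps its color otherwise. If initially there is no
blue-blue edge and there is at least one red-red edge, then after `⌈n/2⌉` rounds
every vertex is red. -/
theorem cycle_majority_all_red (n : ℕ) (hn : 3 ≤ n) (g : ℕ → ZMod n → Bool)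
    (hdyn : ∀ t i, g (t + 1) i = if g t (i - 1) = g t (i + 1) then g t (i - 1) else g t i)
    (hnoblue : ∀ i : ZMod n, ¬(g 0 i = false ∧ g 0 (i + 1) = false))
    (hred : ∃ i : ZMod n, g 0 i = true ∧ g 0 (i + 1) = true) :
    ∀ i : ZMod n, g ((n + 1) / 2) i = true := by
  haveI : NeZero n := ⟨by omega⟩
  obtain ⟨i, hi0, hi1⟩ := hred
  -- the "no blue-blue edge" invariant
  have hnb : ∀ t, ∀ j : ZMod n, ¬(g t j = false ∧ g t (j + 1) = false) := by
    intro t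
    induction t with
    | zero => exact hnoblue
    | succ t ih =>
      have key : ∀ j : ZMod n, g (t + 1) j = false →
          g t (j - 1) = false ∧ g t (j + 1) = false := by
        intro j hj
        rw [hdyn] at hj
        by_cases h : g t (j - 1) = g t (j + 1)
        · simp only [if_pos h] at hj
          exact ⟨hj, h ▸ hj⟩
        · simp only [if_neg h] at hj
          exfalso
          have h1 : g t (j + 1) = true := by
            rcases Bool.eq_false_or_eq_true (g t (j + 1)) with hc | hc
            · exact hc
            · exact absurd ⟨hj, hc⟩ (ih j)
          have h2 : g t (j - 1) = true := by
            rcases Bool.eq_false_or_eq_true (g t (j - 1)) with hc | hc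
            · exact hc
            · have e : j - 1 + 1 = j := by ring
              refine absurd ⟨hc, ?_⟩ (ih (j - 1))
              rw [e]; exact hj
          exact h (h2.trans h1.symm)
      rintro j ⟨hj, hj1⟩
      have a1 : g t (j + 1) = false := (key j hj).2
      have a2 : g t (j + 1 - 1) = false := (key (j + 1) hj1).1
      have e : j + 1 - 1 = j := by ring
      rw [e] at a2
      exact ih j ⟨a2, a1⟩
  -- a vertex with a red neighbor becomes red
  have step : ∀ t, ∀ j : ZMod n,
      (g t (j - 1) = true ∨ g t (j + 1) = true) → g (t + 1) j = true := by
    intro t j hj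
    rw [hdyn]
    by_cases h : g t (j - 1) = g t (j + 1)
    · simp only [if_pos h]
      rcases hj with hj | hj
      · exact hj
      · exact h ▸ hj
    · simp only [if_neg h]
      rcases hj with hj | hj
      · -- j-1 red, so j+1 must be blue; then g t j = true by hnb
        have hb : g t (j + 1) = false := by
          rcases Bool.eq_false_or_eq_true (g t (j + 1)) with hc | hc
          · exact absurd (hj.trans hc.symm) h
          · exact hc
        rcases Bool.eq_false_or_eq_true (g t j) with hc | hc
        · exact hc
        · exact absurd ⟨hc, hb⟩ (hnb t j)
      · have hb : g t (j - 1) = false := by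
          rcases Bool.eq_false_or_eq_true (g t (j - 1)) with hc | hc
          · exact absurd (hc.trans hj.symm) h
          · exact hc
        rcases Bool.eq_false_or_eq_true (g t j) with hc | hc
        · exact hc
        · have e : j - 1 + 1 = j := by ring
          refine absurd ⟨hb, ?_⟩ (hnb t (j - 1))
          rw [e]; exact hc
  -- the red block around i grows
  have grow : ∀ t, ∀ m : ℕ, m ≤ t →
      g t (i - (m : ZMod n)) = true ∧ g t (i + 1 + (m : ZMod n)) = true := by
    intro t
    induction t with
    | zero =>
      intro m hm
      interval_cases m
      exact ⟨by simpa using hi0, by simpa using hi1⟩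
    | succ t ih =>
      intro m hm
      constructor
      · apply step
        right
        rcases m with _ | k
        · have e : i - ((0 : ℕ) : ZMod n) + 1 = i + 1 + ((0 : ℕ) : ZMod n) := by
            push_cast; ring
          rw [e]
          exact (ih 0 (Nat.zero_le t)).2
        · have e : i - ((k + 1 : ℕ) : ZMod n) + 1 = i - ((k : ℕ) : ZMod n) := by
            push_cast; ring
          rw [e]
          exact (ih k (by omega)).1
      · apply step
        left
        rcases m with _ | k
        · have e : i + 1 + ((0 : ℕ) : ZMod n) - 1 = i - ((0 : ℕ) : ZMod n) := by
            push_cast; ring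
          rw [e]
          exact (ih 0 (Nat.zero_le t)).1
        · have e : i + 1 + ((k + 1 : ℕ) : ZMod n) - 1 = i + 1 + ((k : ℕ) : ZMod n) := by
            push_cast; ring
          rw [e]
          exact (ih k (by omega)).2
  -- conclude: the block of radius (n+1)/2 covers everything
  intro j
  set t := (n + 1) / 2 with ht
  set d := (j - i).val with hd
  have hdn : d < n := ZMod.val_lt _
  have hcast : ((d : ℕ) : ZMod n) = j - i := by
    rw [hd, ZMod.natCast_val, ZMod.cast_id]
  by_cases h1 : 1 ≤ d ∧ d ≤ t + 1
  · have := (grow t (d - 1) (by omega)).2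
    have e : i + 1 + ((d - 1 : ℕ) : ZMod n) = j := by
      have : ((d - 1 : ℕ) : ZMod n) = ((d : ℕ) : ZMod n) - 1 := by
        push_cast [Nat.cast_sub h1.1]; ring
      rw [this, hcast]; ring
    rwa [e] at this
  · -- either d = 0 (j = i) or d ≥ t + 2 : go the other way
    by_cases h0 : d = 0
    · have := (grow t 0 (Nat.zero_le t)).1
      have e : i - ((0 : ℕ) : ZMod n) = j := by
        have hji : j - i = 0 := by
          have := hcast
          rw [h0] at this
          simpa using this.symm
        push_cast
        have : j = i := by
          have := sub_eq_zero.mp hji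
          exact this
        rw [this]; ring
      rwa [e] at this
    · have hd2 : t + 2 ≤ d := by omega
      have ht2 : n ≤ 2 * t + 1 := by omega
      have := (grow t (n - d) (by omega)).1
      have e : i - ((n - d : ℕ) : ZMod n) = j := by
        have : ((n - d : ℕ) : ZMod n) = ((n : ℕ) : ZMod n) - ((d : ℕ) : ZMod n) := by
          push_cast [Nat.cast_sub (le_of_lt hdn)]; ring
        rw [this, hcast, ZMod.natCast_self]; ring
      rwa [e] at this
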